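/- Let α > 0 and let q_1 > q_2 > q_3 be real numbers. Then there exist positive masses m_1, m_2, m_3 > 0 and λ < 0 such that q is a central configuration: λ m_j (q_j − q_0) = −α ∑_{k≠j} m_j m_k Q_{jk} for j = 1, 2, 3, where q_0 = (∑_j m_j q_j)/(∑_j m_j). -/

import Mathlib

/-- any ordered configuration of three collinear bodies admits
positive masses and `λ < 0` making it a central configuration. -/
theorem stmt18 (α : ℝ) (hα : 0 < α)
    (q : Fin 3 → ℝ) (hq : StrictAnti q)
    (Q : Matrix (Fin 3) (Fin 3) ℝ)
    (hQ : ∀ i j, Q i j = (q i - q j) * |q i - q j| ^ (-α - 2)) :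
    ∃ (m : Fin 3 → ℝ) (lam : ℝ), (∀ k, 0 < m k) ∧ lam < 0 ∧
      ∀ i, lam * m i * (q i - (∑ k, m k * q k) / (∑ k, m k)) =
        -α * ∑ k ∈ Finset.univ.erase i, m i * m k * Q i k := by
  have h01 : q 1 < q 0 := hq (by decide)
  have h12 : q 2 < q 1 := hq (by decide)
  have ha : (0:ℝ) < q 0 - q 1 := by linarith
  have hb : (0:ℝ) < q 1 - q 2 := by linarith
  have hab : (0:ℝ) < q 0 - q 2 := by linarith
  have hexp : (-α - 1 : ℝ) < 0 := by linarith
  -- powers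
  set A : ℝ := (q 0 - q 1) ^ (-α - 1 : ℝ) with hAdef
  set B : ℝ := (q 1 - q 2) ^ (-α - 1 : ℝ) with hBdef
  set C : ℝ := (q 0 - q 2) ^ (-α - 1 : ℝ) with hCdef
  have hA : 0 < A := Real.rpow_pos_of_pos ha _
  have hB : 0 < B := Real.rpow_pos_of_pos hb _
  have hC : 0 < C := Real.rpow_pos_of_pos hab _
  have hCA : C < A := Real.rpow_lt_rpow_of_neg ha (by linarith) hexp
  have hCB : C < B := Real.rpow_lt_rpow_of_neg hb (by linarith) hexp
  -- values of Q
  have key : ∀ x : ℝ, 0 < x → x * |x| ^ (-α - 2 : ℝ) = x ^ (-α - 1 : ℝ) := by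
    intro x hx
    rw [abs_of_pos hx, show (-α - 1 : ℝ) = 1 + (-α - 2) by ring, Real.rpow_add hx,
      Real.rpow_one]
  have hQ01 : Q 0 1 = A := by rw [hQ, hAdef, key _ ha]
  have hQ12 : Q 1 2 = B := by rw [hQ, hBdef, key _ hb]
  have hQ02 : Q 0 2 = C := by rw [hQ, hCdef, key _ hab]
  have hQ10 : Q 1 0 = -A := by
    rw [hQ, hAdef, show q 1 - q 0 = -(q 0 - q 1) by ring, abs_neg, neg_mul, key _ ha]
  have hQ21 : Q 2 1 = -B := by
    rw [hQ, hBdef, show q 2 - q 1 = -(q 1 - q 2) by ring, abs_neg, neg_mul, key _ hb]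
  have hQ20 : Q 2 0 = -C := by
    rw [hQ, hCdef, show q 2 - q 0 = -(q 0 - q 2) by ring, abs_neg, neg_mul, key _ hab]
  have hQ00 : Q 0 0 = 0 := by simp [hQ]
  have hQ11 : Q 1 1 = 0 := by simp [hQ]
  have hQ22 : Q 2 2 = 0 := by simp [hQ]
  -- the masses
  set D : ℝ := A + B - C with hDdef
  have hD : 0 < D := by rw [hDdef]; linarith
  set K : ℝ := ((q 0 - q 1) * B - (q 1 - q 2) * A) / D with hKdef
  have haK : 0 < q 0 - q 1 - K := by
    have : q 0 - q 1 - K = ((q 0 - q 1) * (A - C) + (q 1 - q 2) * A) / D := by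
      rw [hKdef, hDdef]; field_simp [show A + B - C ≠ 0 by linarith]; ring
    rw [this]
    apply div_pos _ hD
    nlinarith
  set U : ℝ := (q 0 - q 1 - K) * B / C with hUdef
  have hU : 0 < U := by rw [hUdef]; positivity
  have hMU : max 0 (-K) < U := by
    rcases le_or_gt 0 K with h | h
    · rw [max_eq_left (by linarith)]; exact hU
    · rw [max_eq_right (by linarith), hUdef, lt_div_iff₀ hC]
      nlinarith
  set T : ℝ := (max 0 (-K) + U) / 2 with hTdef
  have hTmax : max 0 (-K) < T := by rw [hTdef]; linarith
  have hT0 : 0 < T := lt_of_le_of_lt (le_max_left 0 (-K)) hTmax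
  have hTK : -K < T := lt_of_le_of_lt (le_max_right 0 (-K)) hTmax
  have hTU : T < U := by rw [hTdef]; linarith
  set r : ℝ := (K + T) / A with hrdef
  set s : ℝ := T / B with hsdef
  set m2 : ℝ := (q 0 - q 1 - K - T * C / B) / A with hm2def
  have hr : 0 < r := by rw [hrdef]; apply div_pos (by linarith) hA
  have hs : 0 < s := by rw [hsdef]; exact div_pos hT0 hB
  have hm2 : 0 < m2 := by
    rw [hm2def]
    apply div_pos _ hA
    have h1 : T * C < (q 0 - q 1 - K) * B := by
      rw [hUdef, lt_div_iff₀ hC] at hTU; linarith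
    rw [sub_pos, div_lt_iff₀ hB]; linarith
  have hS : 0 < r + m2 + s := by linarith
  clear_value A B C D K U T r s m2
  -- the two key equations
  have hE1 : (r + m2) * A + s * (C - B) = q 0 - q 1 := by
    rw [hrdef, hm2def, hsdef]
    field_simp
    ring
  have hE2 : -r * (A - C) + (m2 + s) * B = q 1 - q 2 := by
    have hDne : A + B - C ≠ 0 := by linarith
    rw [hrdef, hm2def, hsdef, hKdef, hDdef]
    field_simp
    ring
  -- center of mass identity
  have hCM : r * (q 0 - (r * q 0 + m2 * q 1 + s * q 2) / (r + m2 + s))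
      + m2 * (q 1 - (r * q 0 + m2 * q 1 + s * q 2) / (r + m2 + s))
      + s * (q 2 - (r * q 0 + m2 * q 1 + s * q 2) / (r + m2 + s)) = 0 := by
    field_simp
    ring
  set c : ℝ := (r * q 0 + m2 * q 1 + s * q 2) / (r + m2 + s) with hcdef
  clear_value c
  -- the three residuals are equal, and their weighted sum is zero
  have hX01 : (m2 * A + s * C) - (q 0 - c) = (-r * A + s * B) - (q 1 - c) := by
    linear_combination hE1
  have hX12 : (-r * A + s * B) - (q 1 - c) = (-r * C - m2 * B) - (q 2 - c) := by
    linear_combination hE2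
  have hXsum : r * ((m2 * A + s * C) - (q 0 - c))
      + m2 * ((-r * A + s * B) - (q 1 - c))
      + s * ((-r * C - m2 * B) - (q 2 - c)) = 0 := by
    linear_combination -hCM
  have hmid : (r + m2 + s) * ((-r * A + s * B) - (q 1 - c)) = 0 := by
    linear_combination hXsum - r * hX01 + s * hX12
  have hX1 : (-r * A + s * B) - (q 1 - c) = 0 := by
    rcases mul_eq_zero.mp hmid with h | h
    · exact absurd h hS.ne'
    · exact h
  have hX0 : (m2 * A + s * C) - (q 0 - c) = 0 := by rw [hX01]; exact hX1
  have hX2 : (-r * C - m2 * B) - (q 2 - c) = 0 := by rw [← hX12]; exact hX1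
  -- conclude
  refine ⟨![r, m2, s], -α, ?_, by linarith, ?_⟩
  · intro k
    fin_cases k <;> simpa using (by assumption : _)
  · intro i
    have hsum3 : (∑ k, (![r, m2, s]) k * q k) / (∑ k, (![r, m2, s]) k)
        = c := by
      rw [hcdef]
      simp [Fin.sum_univ_three]
    fin_cases i
    · rw [Finset.sum_erase _ (by simp [hQ]), hsum3]
      simp only [Fin.zero_eta, Fin.mk_one, Fin.reduceFinMk, Fin.isValue,
        Fin.sum_univ_three, Matrix.cons_val_zero, Matrix.cons_val_one,
        Matrix.head_cons, Matrix.cons_val_two, Matrix.tail_cons]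
      rw [hQ00, hQ01, hQ02]
      linear_combination (α * r) * hX0
    · rw [Finset.sum_erase _ (by simp [hQ]), hsum3]
      simp only [Fin.zero_eta, Fin.mk_one, Fin.reduceFinMk, Fin.isValue,
        Fin.sum_univ_three, Matrix.cons_val_zero, Matrix.cons_val_one,
        Matrix.head_cons, Matrix.cons_val_two, Matrix.tail_cons]
      rw [hQ10, hQ11, hQ12]
      linear_combination (α * m2) * hX1
    · rw [Finset.sum_erase _ (by simp [hQ]), hsum3]
      simp only [Fin.zero_eta, Fin.mk_one, Fin.reduceFinMk, Fin.isValue,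
        Fin.sum_univ_three, Matrix.cons_val_zero, Matrix.cons_val_one,
        Matrix.head_cons, Matrix.cons_val_two, Matrix.tail_cons]
      rw [hQ20, hQ21, hQ22]
      linear_combination (α * s) * hX2
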